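/- Let N ≥ 2 be a natural number, G_N the Grover matrix, and θ_N = arccos(1 − 2/N). Then for every natural number t, G_N^t · (0, 1)ᵀ = (sin(t·θ_N), cos(t·θ_N))ᵀ. (The Grover operator acts as a rotation by angle θ_N in the plane spanned by the normalized solution state and the normalized non-solution state, so after t iterations starting from the uniform non-solution state the amplitude of the solution state is sin(t·θ_N).) -/

import Mathlib

open Matrix Real

/-- The 2×2 Grover matrix. -/
noncomputable def GroverM (N : ℕ) : Matrix (Fin 2) (Fin 2) ℝ :=
  !![1 - 2 / (N : ℝ), 2 * Real.sqrt ((N : ℝ) - 1) / (N : ℝ);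
     -(2 * Real.sqrt ((N : ℝ) - 1) / (N : ℝ)), 1 - 2 / (N : ℝ)]

theorem grover_rotation (N : ℕ) (hN : 2 ≤ N) (t : ℕ) :
    (GroverM N ^ t).mulVec ![0, 1] =
      ![Real.sin (t * Real.arccos (1 - 2 / (N : ℝ))),
        Real.cos (t * Real.arccos (1 - 2 / (N : ℝ)))] := by
  have hN0 : (0:ℝ) < (N:ℝ) := by
    have : 0 < N := lt_of_lt_of_le two_pos hN
    exact_mod_cast this
  have hN2 : (2:ℝ) ≤ (N:ℝ) := by exact_mod_cast hN
  set x : ℝ := 1 - 2 / (N : ℝ) with hx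
  have hx1 : -1 ≤ x := by
    have : 2 / (N:ℝ) ≤ 2 := by
      rw [div_le_iff₀ hN0]; nlinarith
    simp only [hx]; linarith
  have hx2 : x ≤ 1 := by
    have : 0 ≤ 2 / (N:ℝ) := by positivity
    simp only [hx]; linarith
  have hcos : Real.cos (Real.arccos x) = x := Real.cos_arccos hx1 hx2
  have hsin : Real.sin (Real.arccos x) = 2 * Real.sqrt ((N : ℝ) - 1) / (N : ℝ) := by
    rw [Real.sin_arccos]
    have h1 : 1 - x ^ 2 = (2 / (N:ℝ))^2 * ((N:ℝ) - 1) := by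
      rw [hx]; field_simp
      ring
    rw [h1, Real.sqrt_mul (by positivity), Real.sqrt_sq (by positivity)]
    ring
  induction t with
  | zero => simp [Matrix.mulVec]
  | succ t ih =>
    rw [pow_succ', ← Matrix.mulVec_mulVec]
    rw [ih]
    funext i
    fin_cases i <;>
      simp [GroverM, Matrix.mulVec, dotProduct, Fin.sum_univ_succ,
        Nat.cast_succ, add_mul, one_mul, Real.sin_add, Real.cos_add, hcos, hsin] <;>
      ring
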